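/- Let C ≤ F_q^n be a linear code with generator matrix G ∈ F_q^{k×n}, and suppose the dual code C^⊥ has minimum distance d^⊥ > 1. If G satisfies the t-all-symbol PIR property, then t ≤ (n−1)/(d^⊥ − 1) + 1. -/

import Mathlib

open Matrix

/-- `G` serves the list of vectors `v` (indexed by `ι`) if there are pairwise disjoint
recovery sets `R i` of column indices with `v i` in the span of the columns indexed by `R i`. -/
def Serves (F : Type*) [Field F] {m n ι : Type*} (G : Matrix m n F) (v : ι → (m → F)) : Prop :=
  ∃ R : ι → Set n, (Pairwise fun a b => Disjoint (R a) (R b)) ∧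
    ∀ i, v i ∈ Submodule.span F ((fun j a => G a j) '' R i)

/-- the `t`-all-symbol PIR property. -/
def ASPIR (F : Type*) [Field F] {m n : Type*} (t : ℕ) (G : Matrix m n F) : Prop :=
  ∀ j : n, Serves F G fun _ : Fin t => fun a => G a j

/-- the `t`-all-symbol batch property. -/
def ASBatch (F : Type*) [Field F] {m n : Type*} (t : ℕ) (G : Matrix m n F) : Prop :=
  ∀ c : Fin t → n, Serves F G fun i => fun a => G a (c i)

lemma key_aux {F : Type*} [Field F] {k n : ℕ} (G : Matrix (Fin k) (Fin n) F)
    (j : Fin n) (S : Set (Fin n)) (hj : j ∉ S)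
    (hmem : (fun a => G a j) ∈ Submodule.span F ((fun j a => G a j) '' S)) :
    ∃ x : Fin n → F, G.mulVec x = 0 ∧ x j = -1 ∧ Function.support x ⊆ insert j S := by
  rw [Finsupp.mem_span_image_iff_linearCombination] at hmem
  obtain ⟨l, hl, htot⟩ := hmem
  have hlsupp : (l.support : Set (Fin n)) ⊆ S := hl
  have hlj : l j = 0 := by
    by_contra h
    exact hj (hlsupp (Finsupp.mem_support_iff.mpr h))
  refine ⟨fun i => l i - if i = j then 1 else 0, ?_, by simp [hlj], ?_⟩
  · funext a
    have h1 := congrFun htot a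
    rw [Finsupp.linearCombination_apply, Finsupp.sum_fintype _ _ (fun i => by simp)] at h1
    simp only [Finset.sum_apply, Pi.smul_apply, smul_eq_mul] at h1
    simp only [Matrix.mulVec, dotProduct, Pi.zero_apply]
    have : ∑ i : Fin n, G a i * (l i - if i = j then 1 else 0)
        = (∑ i : Fin n, l i * G a i) - G a j := by
      simp only [mul_sub]
      rw [Finset.sum_sub_distrib]
      congr 1
      · exact Finset.sum_congr rfl fun i _ => mul_comm _ _
      · simp [Finset.sum_ite_eq']
    rw [this, h1, sub_self]
  · intro i hi
    by_cases h : i = j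
    · exact h ▸ Set.mem_insert j S
    · simp only [Function.mem_support, h, if_false, sub_zero] at hi
      exact Set.mem_insert_of_mem _ (hlsupp (Finsupp.mem_support_iff.mpr hi))

theorem stmt11 {F : Type*} [Field F] {k n t d : ℕ} (G : Matrix (Fin k) (Fin n) F)
    (hd : 1 < d)
    (hex : ∃ x : Fin n → F, G.mulVec x = 0 ∧ x ≠ 0 ∧ (Function.support x).ncard = d)
    (hmin : ∀ x : Fin n → F, G.mulVec x = 0 → x ≠ 0 → d ≤ (Function.support x).ncard)
    (hpir : ASPIR F t G) :
    (t : ℝ) ≤ ((n : ℝ) - 1) / ((d : ℝ) - 1) + 1 := by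
  classical
  have hn1 : 1 ≤ n := by
    obtain ⟨y, _, hyne, _⟩ := hex
    obtain ⟨j, _⟩ := Function.ne_iff.mp hyne
    exact Nat.one_le_iff_ne_zero.mpr (fun h => (h ▸ j).elim0)
  have hd1R : (0:ℝ) < (d:ℝ) - 1 := by
    have : (2:ℝ) ≤ (d:ℝ) := by exact_mod_cast hd
    linarith
  rcases Nat.eq_zero_or_pos t with ht | ht
  · subst ht
    simp only [Nat.cast_zero]
    have hn1R : (1:ℝ) ≤ (n:ℝ) := by exact_mod_cast hn1
    have : (0:ℝ) ≤ ((n:ℝ) - 1) / ((d:ℝ) - 1) := by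
      apply div_nonneg <;> linarith
    linarith
  obtain ⟨R, hdisj, hspan⟩ := hpir ⟨0, hn1⟩
  set j : Fin n := ⟨0, hn1⟩
  set f : Fin t → Finset (Fin n) := fun i => (Set.toFinite (R i)).toFinset with hf
  have hcard : ∀ i : Fin t, j ∉ R i → d - 1 ≤ (f i).card := by
    intro i hji
    obtain ⟨x, hx0, hxj, hxsupp⟩ := key_aux G j (R i) hji (hspan i)
    have hxne : x ≠ 0 := fun h => by simp [h] at hxj
    have h1 : d ≤ (Function.support x).ncard := hmin x hx0 hxne
    have h2 : (Function.support x).ncard ≤ (insert j (R i)).ncard :=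
      Set.ncard_le_ncard hxsupp (Set.toFinite _)
    have h3 : (insert j (R i)).ncard ≤ (R i).ncard + 1 := Set.ncard_insert_le _ _
    have h4 : (R i).ncard = (f i).card := Set.ncard_eq_toFinset_card _ _
    omega
  set A : Finset (Fin t) := Finset.univ.filter (fun i => j ∉ R i) with hA
  have hAc : (Finset.univ.filter (fun i => j ∈ R i)).card ≤ 1 := by
    apply Finset.card_le_one.mpr
    intro a ha b hb
    simp only [Finset.mem_filter] at ha hb
    by_contra hab
    exact Set.disjoint_left.mp (hdisj hab) ha.2 hb.2
  have hAcard : t - 1 ≤ A.card := by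
    have hcompl : A.card + Aᶜ.card = t := by
      rw [Finset.card_add_card_compl, Fintype.card_fin]
    have hAcc : Aᶜ.card ≤ 1 := by
      have hce : Aᶜ = Finset.univ.filter (fun i => j ∈ R i) := by
        ext i; simp [hA]
      rw [hce]; exact hAc
    omega
  have hsub : A.biUnion f ⊆ Finset.univ.erase j := by
    intro x hx
    obtain ⟨i, hiA, hxf⟩ := Finset.mem_biUnion.mp hx
    simp only [hA, Finset.mem_filter] at hiA
    have hxR : x ∈ R i := (Set.Finite.mem_toFinset _).mp hxf
    exact Finset.mem_erase.mpr ⟨fun h => hiA.2 (h ▸ hxR), Finset.mem_univ x⟩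
  have hbU : (A.biUnion f).card = ∑ i ∈ A, (f i).card := by
    apply Finset.card_biUnion
    intro a _ b _ hab
    rw [Function.onFun, Finset.disjoint_left]
    intro x hxa hxb
    exact Set.disjoint_left.mp (hdisj hab)
      ((Set.Finite.mem_toFinset _).mp hxa) ((Set.Finite.mem_toFinset _).mp hxb)
  have hsum : ∑ i ∈ A, (f i).card ≤ n - 1 := by
    rw [← hbU]
    calc (A.biUnion f).card ≤ (Finset.univ.erase j).card := Finset.card_le_card hsub
      _ = n - 1 := by rw [Finset.card_erase_of_mem (Finset.mem_univ j),
        Finset.card_univ, Fintype.card_fin]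
  have hge : A.card * (d - 1) ≤ ∑ i ∈ A, (f i).card := by
    calc A.card * (d-1) = ∑ _i ∈ A, (d-1) := by rw [Finset.sum_const, smul_eq_mul]
      _ ≤ ∑ i ∈ A, (f i).card := Finset.sum_le_sum (fun i hi => by
        simp only [hA, Finset.mem_filter] at hi
        exact hcard i hi.2)
  have keyN : (t - 1) * (d - 1) ≤ n - 1 := by
    calc (t-1)*(d-1) ≤ A.card * (d-1) := Nat.mul_le_mul_right _ hAcard
      _ ≤ _ := le_trans hge hsum
  have hcast : ((t:ℝ) - 1) * ((d:ℝ) - 1) ≤ (n:ℝ) - 1 := by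
    have h := (Nat.cast_le (α := ℝ)).mpr keyN
    rw [Nat.cast_mul, Nat.cast_sub ht, Nat.cast_sub (le_of_lt hd), Nat.cast_sub hn1] at h
    push_cast at h
    exact h
  have := (le_div_iff₀ hd1R).mpr hcast
  linarith
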